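/- π_n is a probability measure on 𝒯_n: Σ_{t ∈ 𝒯_n} m(t) n(t) = ∏_{i=2}^n C(i,2), i.e. Σ_{t ∈ 𝒯_n} π_n(t) = 1. -/

import Mathlib

/-!
Common definitions: rooted unlabeled trees on `n` vertices, the growth/pruning
coefficients `n(t,t')` and `m(t,t')`, the measure `π_n`, the up/down transition
probabilities, the down-up and up-down Markov chains, and separation distance.

A rooted tree is represented as `PreTree.node cs` where `cs` is the list of
subtrees of the root's children.  An *unlabeled* rooted tree is represented by
its canonical representative (children recursively sorted by an injective
encoding into `ℕ`), and `trees n` is the finite set of canonical rooted trees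
on `n` vertices.
-/

namespace RootedTreeChain

inductive PreTree : Type where
  | node : List PreTree → PreTree

namespace PreTree

/- Number of vertices. -/
mutual
  def size : PreTree → ℕ
    | .node cs => 1 + sizeList cs
  def sizeList : List PreTree → ℕ
    | [] => 0
    | t :: ts => size t + sizeList ts
end

mutual
def deq : (a b : PreTree) → Decidable (a = b)
  | .node cs, .node ds =>
    match deqList cs ds with
    | isTrue h => isTrue (by rw [h])
    | isFalse h => isFalse (by intro hh; cases hh; exact h rfl)
def deqList : (as bs : List PreTree) → Decidable (as = bs)
  | [], [] => isTrue rfl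
  | [], _ :: _ => isFalse (by simp)
  | _ :: _, [] => isFalse (by simp)
  | a :: as, b :: bs =>
    match deq a b, deqList as bs with
    | isTrue h1, isTrue h2 => isTrue (by rw [h1, h2])
    | isFalse h1, _ => isFalse (by intro hh; injection hh; contradiction)
    | _, isFalse h2 => isFalse (by intro hh; injection hh; contradiction)
end

instance : DecidableEq PreTree := deq

/- An injective encoding of trees into `ℕ`, used only to sort children
so that each unlabeled rooted tree has a unique canonical representative. -/
mutual
  def enc : PreTree → ℕ
    | .node cs => encList cs
  def encList : List PreTree → ℕ
    | [] => 0
    | t :: ts => Nat.pair (enc t) (encList ts) + 1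
end

/- Canonical representative of the isomorphism class of a rooted tree:
recursively sort the children by their encoding. -/
mutual
  def canon : PreTree → PreTree
    | .node cs => .node ((canonList cs).mergeSort (fun a b => enc a ≤ enc b))
  def canonList : List PreTree → List PreTree
    | [] => []
    | t :: ts => canon t :: canonList ts
end

/-- The one-vertex rooted tree `•`. -/
def leaf : PreTree := .node []

/- The addresses (paths of child indices from the root) of all vertices. -/
mutual
  def positions : PreTree → List (List ℕ)
    | .node cs => [] :: positionsList 0 cs
  def positionsList : ℕ → List PreTree → List (List ℕ)
    | _, [] => []
    | i, t :: ts => (positions t).map (fun p => i :: p) ++ positionsList (i + 1) ts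
end

/- The addresses of all terminal vertices (vertices with no outgoing edge). -/
mutual
  def termPositions : PreTree → List (List ℕ)
    | .node [] => [[]]
    | .node (c :: cs) => termPositionsList 0 (c :: cs)
  def termPositionsList : ℕ → List PreTree → List (List ℕ)
    | _, [] => []
    | i, t :: ts => (termPositions t).map (fun p => i :: p) ++ termPositionsList (i + 1) ts
end

/- Attach a new terminal vertex by an edge to the vertex at address `p`. -/
mutual
  def addLeafAt : PreTree → List ℕ → PreTree
    | .node cs, [] => .node (cs ++ [leaf])
    | .node cs, i :: p => .node (addLeafAtList cs i p)
  def addLeafAtList : List PreTree → ℕ → List ℕ → List PreTree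
    | [], _, _ => []
    | t :: ts, 0, p => addLeafAt t p :: ts
    | t :: ts, i + 1, p => t :: addLeafAtList ts i p
end

/- Remove the (terminal) vertex at address `p` together with the edge into it. -/
mutual
  def removeAt : PreTree → List ℕ → PreTree
    | .node cs, [] => .node cs
    | .node cs, [i] => .node (cs.eraseIdx i)
    | .node cs, i :: p => .node (removeAtList cs i p)
  def removeAtList : List PreTree → ℕ → List ℕ → List PreTree
    | [], _, _ => []
    | t :: ts, 0, p => removeAt t p :: ts
    | t :: ts, i + 1, p => t :: removeAtList ts i p
end

/-- For `s ↗ t` (and more generally any `s, t` with `size t = size s + 1`),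
`ncoef s t` is `n(s,t)`: the number of vertices of `s` to which a new edge can
be added to obtain `t`. -/
def ncoef (s t : PreTree) : ℕ :=
  ((positions s).filter (fun p => canon (addLeafAt s p) = t)).length

/-- For `s ↗ t`, `mcoef s t` is `m(s,t)`: the number of edges of `t` (into a
terminal vertex) which when removed give `s`. -/
def mcoef (s t : PreTree) : ℕ :=
  ((termPositions t).filter (fun p => canon (removeAt t p) = s)).length

/-- The list of all (canonical representatives of) rooted unlabeled trees on
`n` vertices: every tree on `n+1 ≥ 2` vertices is obtained by attaching a new
terminal vertex to a tree on `n` vertices. -/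
def treeList : ℕ → List PreTree
  | 0 => []
  | 1 => [leaf]
  | n + 2 =>
      ((treeList (n + 1)).flatMap
        (fun t => (positions t).map (fun p => canon (addLeafAt t p)))).dedup

/-- The set `𝒯_n` of rooted unlabeled trees on `n` vertices. -/
def trees (n : ℕ) : Finset PreTree := (treeList n).toFinset

/-- `T_n = |𝒯_n|`, the number of rooted unlabeled trees on `n` vertices. -/
def T (n : ℕ) : ℕ := (trees n).card

/-- Generalized growth coefficients: `nGen k t t'` is the coefficient `n(t,t')`
of `t'` in `G^k(t)` (for `size t' = size t + k`). -/
def nGen : ℕ → PreTree → PreTree → ℕ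
  | 0, t, t' => if t = t' then 1 else 0
  | k + 1, t, t' => ((treeList (t.size + k)).map (fun s => nGen k t s * ncoef s t')).sum

/-- Generalized pruning coefficients: `mGen k t t'` is the coefficient `m(t,t')`
of `t` in `P^k(t')` (for `size t' = size t + k`). -/
def mGen : ℕ → PreTree → PreTree → ℕ
  | 0, t, t' => if t = t' then 1 else 0
  | k + 1, t, t' => ((treeList (t'.size - 1)).map (fun s => mcoef s t' * mGen k t s)).sum

/-- `m(t) = m(•,t)`, the number of ways to take `t` apart by sequentially
removing terminal edges. -/
def mWt (t : PreTree) : ℕ := mGen (t.size - 1) leaf t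

/-- `n(t) = n(•,t)`, the number of ways to build `t` up from `•`. -/
def nWt (t : PreTree) : ℕ := nGen (t.size - 1) leaf t

/-- The measure `π_n(t) = m(t) n(t) / ∏_{i=2}^n C(i,2)` on `𝒯_n`. -/
def piM (n : ℕ) (t : PreTree) : ℚ :=
  (mWt t * nWt t : ℚ) / ∏ i ∈ Finset.Icc 2 n, (Nat.choose i 2 : ℚ)

/-- Upward transition probability `P_u(s,t) = m(s,t) n(t) / (C(n,2) n(s))`
from `s ∈ 𝒯_{n-1}` to `t ∈ 𝒯_n`. -/
def Pu (n : ℕ) (s t : PreTree) : ℚ :=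
  (mcoef s t : ℚ) * (nWt t : ℚ) / ((Nat.choose n 2 : ℚ) * (nWt s : ℚ))

/-- Downward transition probability `P_d(t,s) = m(s,t) m(s) / m(t)`
from `t ∈ 𝒯_n` to `s ∈ 𝒯_{n-1}`. -/
def Pd (t s : PreTree) : ℚ :=
  (mcoef s t : ℚ) * (mWt s : ℚ) / (mWt t : ℚ)

/-- The down-up Markov chain on `𝒯_n`:
`K(t,t') = Σ_{s : s ↗ t, s ↗ t'} P_d(t,s) P_u(s,t')`.  (The sum may be taken
over all `s ∈ 𝒯_{n-1}` since the summand vanishes unless `s ↗ t` and `s ↗ t'`.) -/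
def K (n : ℕ) (t t' : PreTree) : ℚ :=
  ∑ s ∈ trees (n - 1), Pd t s * Pu n s t'

/-- `r`-step transition probabilities `K^r(t,t')` of the down-up chain. -/
def Kpow (n : ℕ) : ℕ → PreTree → PreTree → ℚ
  | 0, t, t' => if t = t' then 1 else 0
  | r + 1, t, t' => ∑ s ∈ trees n, K n t s * Kpow n r s t'

/-- The up-down Markov chain on `𝒯_n`:
`DU_n(t,t') = Σ_{s : s ⋗ t, s ⋗ t'} P_u(t,s) P_d(s,t')`. -/
def DU (n : ℕ) (t t' : PreTree) : ℚ :=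
  ∑ s ∈ trees (n + 1), Pu (n + 1) t s * Pd s t'

/-- `r`-step transition probabilities of the up-down chain. -/
def DUpow (n : ℕ) : ℕ → PreTree → PreTree → ℚ
  | 0, t, t' => if t = t' then 1 else 0
  | r + 1, t, t' => ∑ s ∈ trees n, DU n t s * DUpow n r s t'

/-- Maximal separation distance `s^*(r) = max_{t,t' ∈ 𝒯_n} [1 - K^r(t,t')/π_n(t')]`
of the down-up chain on `𝒯_n`. -/
noncomputable def sStar (n r : ℕ) : ℝ :=
  sSup {x : ℝ | ∃ t ∈ trees n, ∃ t' ∈ trees n,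
    x = 1 - (Kpow n r t t' : ℝ) / (piM n t' : ℝ)}

/-- Maximal separation distance of the up-down chain on `𝒯_n`. -/
noncomputable def sStarDU (n r : ℕ) : ℝ :=
  sSup {x : ℝ | ∃ t ∈ trees n, ∃ t' ∈ trees n,
    x = 1 - (DUpow n r t t' : ℝ) / (piM n t' : ℝ)}

/-- The path on `n` vertices (rooted at an end): the unique rooted tree on
`n ≥ 2` vertices with exactly one terminal vertex. -/
def pathTree : ℕ → PreTree
  | 0 => leaf
  | 1 => leaf
  | n + 2 => .node [pathTree (n + 1)]

/-- The star on `n` vertices (rooted at the center): the unique rooted tree on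
`n` vertices with `n-1` terminal vertices. -/
def starTree (n : ℕ) : PreTree := .node (List.replicate (n - 1) leaf)


/- The order of the symmetry group `SG(t) = ∏_{v ∈ t} SG(t,v)`, where for a
vertex `v` with children `v_1, …, v_k`, `SG(t,v)` is generated by the
permutations exchanging isomorphic subtrees rooted at the `v_i`. -/
mutual
  def sgOrder : PreTree → ℕ
    | .node cs => sgOrderList cs *
        ((canonList cs).dedup.map (fun c => Nat.factorial ((canonList cs).count c))).prod
  def sgOrderList : List PreTree → ℕ
    | [] => 1
    | t :: ts => sgOrder t * sgOrderList ts
end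

/- `hProd t = ∏_{v ∈ t} h(v)`, the product over all vertices `v` of `t` of the
number `h(v)` of vertices of the subtree rooted at `v`. -/
mutual
  def hProd : PreTree → ℕ
    | .node cs => size (.node cs) * hProdList cs
  def hProdList : List PreTree → ℕ
    | [] => 1
    | t :: ts => hProd t * hProdList ts
end

/-- The matrix entry of `G P : ℂ𝒯_n → ℂ𝒯_n`: the coefficient of `t'` in `G(P(t))`. -/
def gpEntry (n : ℕ) (t t' : PreTree) : ℕ :=
  ∑ s ∈ trees (n - 1), mcoef s t * ncoef s t'

/-- The matrix entry of `(G P)^l : ℂ𝒯_n → ℂ𝒯_n`: the coefficient of `t'` in `(GP)^l(t)`. -/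
def gpPow (n : ℕ) : ℕ → PreTree → PreTree → ℕ
  | 0, t, t' => if t = t' then 1 else 0
  | l + 1, t, t' => ∑ u ∈ trees n, gpPow n l t u * gpEntry n u t'

end PreTree

namespace PreTree

/-- Mutual induction principle for `PreTree` and `List PreTree`. -/
theorem mutual_ind {P : PreTree → Prop} {Q : List PreTree → Prop}
    (hnode : ∀ cs, Q cs → P (.node cs)) (hnil : Q [])
    (hcons : ∀ c cs, P c → Q cs → Q (c :: cs)) :
    (∀ t, P t) ∧ (∀ l, Q l) := by
  have h1 : ∀ t, P t := fun t =>
    PreTree.rec (motive_1 := P) (motive_2 := Q) hnode hnil hcons t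
  refine ⟨h1, fun l => ?_⟩
  induction l with
  | nil => exact hnil
  | cons c cs ih => exact hcons c cs (h1 c) ih

theorem size_node (cs : List PreTree) : size (.node cs) = 1 + sizeList cs := by
  simp [size]

theorem sizeList_eq (l : List PreTree) : sizeList l = (l.map size).sum := by
  induction l with
  | nil => simp [sizeList]
  | cons c cs ih => simp [sizeList, ih]

theorem size_pos (t : PreTree) : 0 < size t := by
  cases t with | node cs => simp only [size]; omega

theorem size_leaf : size leaf = 1 := by simp [leaf, size, sizeList]

theorem canonList_eq_map (l : List PreTree) : canonList l = l.map canon := by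
  induction l with
  | nil => simp [canonList]
  | cons c cs ih => simp [canonList, ih]

theorem enc_injective :
    (∀ t u : PreTree, enc t = enc u → t = u) ∧
    (∀ l m : List PreTree, encList l = encList m → l = m) := by
  apply mutual_ind (Q := fun l => ∀ m, encList l = encList m → l = m)
  · intro cs ih u h
    cases u with
    | node ds => exact congrArg PreTree.node (ih ds (by simpa [enc] using h))
  · intro m h
    cases m with
    | nil => rfl
    | cons d ds => simp [encList] at h
  · intro c cs ihc ihcs m h
    cases m with
    | nil => simp [encList] at h
    | cons d ds =>
      simp only [encList, Nat.add_right_cancel_iff] at h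
      rw [Nat.pair_eq_pair] at h
      rw [ihc d h.1, ihcs ds h.2]

theorem canon_node (cs : List PreTree) :
    canon (.node cs) = .node ((cs.map canon).mergeSort (fun a b => enc a ≤ enc b)) := by
  simp [canon, canonList_eq_map]

theorem mergeSort_canon_eq {l₁ l₂ : List PreTree} (h : l₁.Perm l₂) :
    l₁.mergeSort (fun a b => enc a ≤ enc b) = l₂.mergeSort (fun a b => enc a ≤ enc b) := by
  haveI : Std.Antisymm (fun a b : PreTree => enc a ≤ enc b) :=
    ⟨fun a b h1 h2 => enc_injective.1 a b (Nat.le_antisymm h1 h2)⟩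
  have htrans : ∀ a b c : PreTree, (decide (enc a ≤ enc b)) = true →
      decide (enc b ≤ enc c) = true → decide (enc a ≤ enc c) = true := by
    intro a b c h1 h2
    simp only [decide_eq_true_eq] at *
    omega
  have htot : ∀ a b : PreTree, (decide (enc a ≤ enc b) || decide (enc b ≤ enc a)) = true := by
    intro a b
    simp only [Bool.or_eq_true, decide_eq_true_eq]
    omega
  refine (fun hp hs1 hs2 => List.Perm.eq_of_pairwise' (r := fun a b : PreTree => enc a ≤ enc b) hs1 hs2 hp) ?_ ?_ ?_
  · exact ((l₁.mergeSort_perm _).trans h).trans (l₂.mergeSort_perm _).symm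
  · exact List.Pairwise.imp (by simp) (List.pairwise_mergeSort htrans htot l₁)
  · exact List.Pairwise.imp (by simp) (List.pairwise_mergeSort htrans htot l₂)

theorem canon_perm {cs ds : List PreTree} (h : (cs.map canon).Perm (ds.map canon)) :
    canon (.node cs) = canon (.node ds) := by
  rw [canon_node, canon_node, mergeSort_canon_eq h]

theorem perm_of_canon_eq {cs ds : List PreTree} (h : canon (.node cs) = canon (.node ds)) :
    (cs.map canon).Perm (ds.map canon) := by
  rw [canon_node, canon_node, PreTree.node.injEq] at h
  have p1 : (cs.map canon).Perm ((cs.map canon).mergeSort (fun a b => enc a ≤ enc b)) :=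
    ((cs.map canon).mergeSort_perm _).symm
  rw [h] at p1
  exact p1.trans ((ds.map canon).mergeSort_perm _)

theorem canon_canon : ∀ t : PreTree, canon (canon t) = canon t :=
  (mutual_ind (P := fun t => canon (canon t) = canon t)
    (Q := fun l => ∀ c ∈ l, canon (canon c) = canon c)
    (fun cs ih => by
      show canon (canon (.node cs)) = canon (.node cs)
      rw [canon_node cs, canon_node]
      congr 1
      have hperm : ((((cs.map canon).mergeSort (fun a b => enc a ≤ enc b)).map canon)).Perm
          (cs.map canon) := by
        have h4 := ((cs.map canon).mergeSort_perm (fun a b => enc a ≤ enc b)).map canon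
        have h5 : (cs.map canon).map canon = cs.map canon := by
          rw [List.map_map]
          exact List.map_congr_left (fun c hc => ih c hc)
        rwa [h5] at h4
      exact mergeSort_canon_eq hperm)
    (by intro c h; simp at h)
    (by
      intro c cs ihc ihcs d hd
      rcases List.mem_cons.mp hd with hd | hd
      · exact hd ▸ ihc
      · exact ihcs d hd)).1

theorem canon_size : ∀ t : PreTree, size (canon t) = size t :=
  (mutual_ind (P := fun t => size (canon t) = size t)
    (Q := fun l => ∀ c ∈ l, size (canon c) = size c)
    (fun cs ih => by
      show size (canon (.node cs)) = size (.node cs)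
      rw [canon_node, size_node, size_node, sizeList_eq, sizeList_eq]
      congr 1
      have h1 := (((cs.map canon).mergeSort_perm (fun a b => enc a ≤ enc b)).map size).sum_eq
      rw [h1, List.map_map]
      exact congrArg List.sum (List.map_congr_left ih))
    (by intro c h; simp at h)
    (by
      intro c cs ihc ihcs d hd
      rcases List.mem_cons.mp hd with hd | hd
      · exact hd ▸ ihc
      · exact ihcs d hd)).1

theorem canon_leaf : canon leaf = leaf := by
  simp [leaf, canon, canonList]

theorem canon_eq_leaf_iff {t : PreTree} : canon t = leaf ↔ t = leaf := by
  constructor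
  · intro h
    cases t with
    | node cs =>
      rw [canon_node, leaf, PreTree.node.injEq] at h
      have h1 : (cs.map canon).Perm [] := h ▸ ((cs.map canon).mergeSort_perm _).symm
      have h2 : cs.map canon = [] := h1.eq_nil
      have h3 : cs = [] := List.map_eq_nil_iff.mp h2
      rw [h3, leaf]
  · intro h; rw [h, canon_leaf]

/-- The canon-multiset of children. -/
def keyOf (l : List PreTree) : Multiset PreTree := (l.map canon : List PreTree)

theorem keyOf_nil : keyOf [] = 0 := rfl

theorem keyOf_cons (c : PreTree) (l : List PreTree) :
    keyOf (c :: l) = canon c ::ₘ keyOf l := rfl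

theorem keyOf_append (l₁ l₂ : List PreTree) : keyOf (l₁ ++ l₂) = keyOf l₁ + keyOf l₂ := by
  simp [keyOf]

theorem keyOf_perm {l₁ l₂ : List PreTree} (h : l₁.Perm l₂) : keyOf l₁ = keyOf l₂ :=
  Multiset.coe_eq_coe.mpr (h.map canon)

theorem canon_node_congr {cs ds : List PreTree} (h : keyOf cs = keyOf ds) :
    canon (.node cs) = canon (.node ds) :=
  canon_perm (Multiset.coe_eq_coe.mp h)

theorem keyOf_of_canon_eq {cs ds : List PreTree} (h : canon (.node cs) = canon (.node ds)) :
    keyOf cs = keyOf ds :=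
  Multiset.coe_eq_coe.mpr (perm_of_canon_eq h)

/-- Canonical tree with given multiset of children. -/
noncomputable def F (M : Multiset PreTree) : PreTree := canon (.node M.toList)

theorem F_key (l : List PreTree) : F (keyOf l) = canon (.node l) := by
  unfold F
  apply canon_perm
  have h1 : (((keyOf l).toList : List PreTree) : Multiset PreTree) = keyOf l :=
    Multiset.coe_toList _
  have h2 : ((keyOf l).toList).Perm (l.map canon) := Multiset.coe_eq_coe.mp h1
  have h4 := h2.map canon
  rwa [List.map_map, show canon ∘ canon = canon from funext canon_canon] at h4

mutual
  /-- The multiset of trees obtained by attaching one new leaf to `t` (raw, no canon). -/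
  def growM : PreTree → Multiset PreTree
    | .node cs => (PreTree.node (cs ++ [leaf])) ::ₘ (growL cs).map PreTree.node
  /-- All ways to attach one new leaf to some tree in the list `cs`. -/
  def growL : List PreTree → Multiset (List PreTree)
    | [] => 0
    | c :: cs => (growM c).map (· :: cs) + (growL cs).map (c :: ·)
end

mutual
  /-- The multiset of trees obtained by removing one terminal vertex (raw, no canon). -/
  def pruneM : PreTree → Multiset PreTree
    | .node cs => (pruneL cs).map PreTree.node
  /-- All ways to remove one terminal vertex from some tree in the list `cs`. -/
  def pruneL : List PreTree → Multiset (List PreTree)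
    | [] => 0
    | c :: cs => (if c = leaf then {cs} else (pruneM c).map (· :: cs)) + (pruneL cs).map (c :: ·)
end

theorem growM_node (cs : List PreTree) :
    growM (.node cs) = (PreTree.node (cs ++ [leaf])) ::ₘ (growL cs).map PreTree.node := by
  rw [growM]

theorem growL_nil : growL [] = 0 := by rw [growL]

theorem growL_cons (c : PreTree) (cs : List PreTree) :
    growL (c :: cs) = (growM c).map (· :: cs) + (growL cs).map (c :: ·) := by
  rw [growL]

theorem pruneM_node (cs : List PreTree) :
    pruneM (.node cs) = (pruneL cs).map PreTree.node := by
  rw [pruneM]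

theorem pruneL_nil : pruneL [] = 0 := by rw [pruneL]

theorem pruneL_cons (c : PreTree) (cs : List PreTree) :
    pruneL (c :: cs) =
      (if c = leaf then {cs} else (pruneM c).map (· :: cs)) + (pruneL cs).map (c :: ·) := by
  rw [pruneL]

theorem sizeList_append (l₁ l₂ : List PreTree) :
    sizeList (l₁ ++ l₂) = sizeList l₁ + sizeList l₂ := by
  simp [sizeList_eq]

theorem sizeList_concat_leaf (l : List PreTree) :
    sizeList (l ++ [leaf]) = sizeList l + 1 := by
  rw [sizeList_append]
  simp [sizeList, size_leaf]

theorem size_growM : ∀ t : PreTree, ∀ u ∈ growM t, size u = size t + 1 := by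
  refine (mutual_ind (P := fun t => ∀ u ∈ growM t, size u = size t + 1)
    (Q := fun cs => ∀ es ∈ growL cs, sizeList es = sizeList cs + 1) ?_ ?_ ?_).1
  · intro cs ih u hu
    rw [growM_node] at hu
    rcases Multiset.mem_cons.mp hu with h | h
    · rw [h, size_node, size_node, sizeList_concat_leaf]; omega
    · rcases Multiset.mem_map.mp h with ⟨es, hes, rfl⟩
      rw [size_node, size_node, ih es hes]; omega
  · intro es hes; rw [growL_nil] at hes; simp at hes
  · intro c cs ihc ihcs es hes
    rw [growL_cons] at hes
    rcases Multiset.mem_add.mp hes with h | h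
    · rcases Multiset.mem_map.mp h with ⟨x, hx, rfl⟩
      simp only [sizeList]
      rw [ihc x hx]; omega
    · rcases Multiset.mem_map.mp h with ⟨es', hes', rfl⟩
      simp only [sizeList]
      rw [ihcs es' hes']; omega

theorem size_pruneM : ∀ t : PreTree, ∀ u ∈ pruneM t, size u + 1 = size t := by
  refine (mutual_ind (P := fun t => ∀ u ∈ pruneM t, size u + 1 = size t)
    (Q := fun cs => ∀ ds ∈ pruneL cs, sizeList ds + 1 = sizeList cs) ?_ ?_ ?_).1
  · intro cs ih u hu
    rw [pruneM_node] at hu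
    rcases Multiset.mem_map.mp hu with ⟨ds, hds, rfl⟩
    rw [size_node, size_node]
    have := ih ds hds
    omega
  · intro ds hds; rw [pruneL_nil] at hds; simp at hds
  · intro c cs ihc ihcs ds hds
    rw [pruneL_cons] at hds
    rcases Multiset.mem_add.mp hds with h | h
    · by_cases hc : c = leaf
      · rw [if_pos hc] at h
        rw [Multiset.mem_singleton.mp h]
        subst hc
        simp only [sizeList, size_leaf]
        omega
      · rw [if_neg hc] at h
        rcases Multiset.mem_map.mp h with ⟨x, hx, rfl⟩
        simp only [sizeList]
        have := ihc x hx
        omega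
    · rcases Multiset.mem_map.mp h with ⟨ds', hds', rfl⟩
      simp only [sizeList]
      have := ihcs ds' hds'
      omega

theorem ne_leaf_of_mem_growM {t u : PreTree} (hu : u ∈ growM t) : u ≠ leaf := by
  intro h
  have h1 := size_growM t u hu
  have h2 := size_pos t
  rw [h, size_leaf] at h1
  omega

theorem exists_mem_pruneM : ∀ t : PreTree, t ≠ leaf → ∃ u, u ∈ pruneM t := by
  refine (mutual_ind (P := fun t => t ≠ leaf → ∃ u, u ∈ pruneM t)
    (Q := fun cs => cs ≠ [] → ∃ ds, ds ∈ pruneL cs) ?_ ?_ ?_).1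
  · intro cs ih h
    have hcs : cs ≠ [] := by
      intro h0; exact h (by rw [h0]; rfl)
    rcases ih hcs with ⟨ds, hds⟩
    exact ⟨.node ds, by rw [pruneM_node]; exact Multiset.mem_map_of_mem _ hds⟩
  · intro h; exact absurd rfl h
  · intro c cs ihc ihcs _
    by_cases hc : c = leaf
    · refine ⟨cs, ?_⟩
      rw [pruneL_cons, if_pos hc]
      exact Multiset.mem_add.mpr (Or.inl (Multiset.mem_singleton_self _))
    · rcases ihc hc with ⟨x, hx⟩
      refine ⟨x :: cs, ?_⟩
      rw [pruneL_cons, if_neg hc]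
      exact Multiset.mem_add.mpr (Or.inl (Multiset.mem_map_of_mem _ hx))

theorem pruneL_concat (cs : List PreTree) :
    pruneL (cs ++ [leaf]) = (pruneL cs).map (· ++ [leaf]) + {cs} := by
  induction cs with
  | nil =>
      rw [List.nil_append, pruneL_cons, pruneL_nil]
      simp
  | cons c cs ih =>
      rw [List.cons_append, pruneL_cons, ih, pruneL_cons]
      by_cases hc : c = leaf
      · rw [if_pos hc, if_pos hc]
        simp only [Multiset.map_add, Multiset.map_map, Multiset.map_singleton,
          Function.comp, List.cons_append]
        rw [add_assoc]
      · rw [if_neg hc, if_neg hc]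
        simp only [Multiset.map_add, Multiset.map_map, Multiset.map_singleton,
          Function.comp, List.cons_append]
        rw [add_assoc]

theorem bind_map_comm {α β γ : Type*} (m : Multiset α) (n : Multiset β) (f : α → β → γ) :
    m.bind (fun a => n.map (f a)) = n.bind (fun b => m.map (fun a => f a b)) := by
  have h1 : ∀ a, n.map (f a) = n.bind (fun b => {f a b}) :=
    fun a => (Multiset.bind_singleton n (f a)).symm
  have h2 : ∀ b, m.map (fun a => f a b) = m.bind (fun a => {f a b}) :=
    fun b => (Multiset.bind_singleton m _).symm
  simp only [h1, h2]
  exact Multiset.bind_bind m n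

theorem growL_key_cons (c : PreTree) (cs : List PreTree) :
    (growL (c :: cs)).map keyOf =
      (growM c).map (fun x => canon x ::ₘ keyOf cs) +
        (growL cs).map (fun es => canon c ::ₘ keyOf es) := by
  rw [growL_cons]
  simp only [Multiset.map_add, Multiset.map_map, Function.comp_def, keyOf_cons]

theorem pruneL_key_cons (c : PreTree) (cs : List PreTree) :
    (pruneL (c :: cs)).map keyOf =
      (if c = leaf then {keyOf cs} else (pruneM c).map (fun x => canon x ::ₘ keyOf cs)) +
        (pruneL cs).map (fun ds => canon c ::ₘ keyOf ds) := by
  rw [pruneL_cons]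
  simp only [Multiset.map_add, Multiset.map_map, Function.comp_def, keyOf_cons, apply_ite
    (Multiset.map keyOf), Multiset.map_singleton]

theorem growL_key_perm {cs ds : List PreTree} (h : cs.Perm ds) :
    (growL cs).map keyOf = (growL ds).map keyOf := by
  induction h with
  | nil => rfl
  | cons x h ih =>
      rename_i l₁ l₂
      rw [growL_key_cons, growL_key_cons, keyOf_perm h]
      congr 1
      have h2 := congrArg (Multiset.map (fun k => canon x ::ₘ k)) ih
      simpa [Multiset.map_map, Function.comp] using h2
  | swap x y l =>
      have e : ∀ (a : PreTree) (m : List PreTree),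
          (growL m).map (fun es => canon a ::ₘ keyOf es) =
            ((growL m).map keyOf).map (fun k => canon a ::ₘ k) := by
        intro a m; rw [Multiset.map_map]; rfl
      rw [growL_key_cons, growL_key_cons, e, e, growL_key_cons, growL_key_cons]
      simp only [Multiset.map_add, Multiset.map_map, Function.comp, keyOf_cons]
      rw [show (fun a => canon a ::ₘ canon x ::ₘ keyOf l) =
            (fun a => canon x ::ₘ canon a ::ₘ keyOf l) from
          funext fun a => Multiset.cons_swap _ _ _,
        show (fun a => canon a ::ₘ canon y ::ₘ keyOf l) =
            (fun a => canon y ::ₘ canon a ::ₘ keyOf l) from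
          funext fun a => Multiset.cons_swap _ _ _,
        show (fun es => canon y ::ₘ canon x ::ₘ keyOf es) =
            (fun es => canon x ::ₘ canon y ::ₘ keyOf es) from
          funext fun es => Multiset.cons_swap _ _ _]
      rw [add_left_comm]
  | trans h₁ h₂ ih₁ ih₂ => exact ih₁.trans ih₂

theorem pruneL_key_perm {cs ds : List PreTree} (h : cs.Perm ds) :
    (pruneL cs).map keyOf = (pruneL ds).map keyOf := by
  induction h with
  | nil => rfl
  | cons x h ih =>
      rename_i l₁ l₂
      rw [pruneL_key_cons, pruneL_key_cons, keyOf_perm h]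
      congr 1
      have h2 := congrArg (Multiset.map (fun k => canon x ::ₘ k)) ih
      simpa [Multiset.map_map, Function.comp] using h2
  | swap x y l =>
      have e : ∀ (a : PreTree) (m : List PreTree),
          (pruneL m).map (fun ds => canon a ::ₘ keyOf ds) =
            ((pruneL m).map keyOf).map (fun k => canon a ::ₘ k) := by
        intro a m; rw [Multiset.map_map]; rfl
      rw [pruneL_key_cons, pruneL_key_cons, e, e, pruneL_key_cons, pruneL_key_cons]
      simp only [Multiset.map_add, Multiset.map_map, Function.comp, keyOf_cons,
        apply_ite (Multiset.map (fun k => canon y ::ₘ k)),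
        apply_ite (Multiset.map (fun k => canon x ::ₘ k)), Multiset.map_singleton]
      rw [show (fun a => canon a ::ₘ canon x ::ₘ keyOf l) =
            (fun a => canon x ::ₘ canon a ::ₘ keyOf l) from
          funext fun a => Multiset.cons_swap _ _ _,
        show (fun a => canon a ::ₘ canon y ::ₘ keyOf l) =
            (fun a => canon y ::ₘ canon a ::ₘ keyOf l) from
          funext fun a => Multiset.cons_swap _ _ _,
        show (fun es => canon y ::ₘ canon x ::ₘ keyOf es) =
            (fun es => canon x ::ₘ canon y ::ₘ keyOf es) from
          funext fun es => Multiset.cons_swap _ _ _]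
      rw [add_left_comm]
  | trans h₁ h₂ ih₁ ih₂ => exact ih₁.trans ih₂

theorem exists_canon_eq_of_mem_keyOf {c : PreTree} {ds : List PreTree}
    (h : canon c ∈ keyOf ds) : ∃ d ∈ ds, canon d = canon c := by
  rcases List.mem_map.mp (Multiset.mem_coe.mp h) with ⟨d, hd, hcd⟩
  exact ⟨d, hd, hcd⟩

theorem growL_key_congr : ∀ (cs : List PreTree),
    (∀ c ∈ cs, ∀ u, canon c = canon u → (growM c).map canon = (growM u).map canon) →
    ∀ ds, keyOf cs = keyOf ds → (growL cs).map keyOf = (growL ds).map keyOf := by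
  intro cs
  induction cs with
  | nil =>
      intro _ ds h
      have : ds.map canon = [] := by
        have := h.symm
        rwa [keyOf_nil, keyOf, Multiset.coe_eq_zero] at this
      rw [List.map_eq_nil_iff.mp this]
  | cons c cs' ih =>
      intro hinv ds h
      have hc : canon c ∈ keyOf ds := by
        rw [← h, keyOf_cons]; exact Multiset.mem_cons_self _ _
      rcases exists_canon_eq_of_mem_keyOf hc with ⟨d, hd, hcd⟩
      have hperm := List.perm_cons_erase hd
      rw [growL_key_perm hperm]
      have hkey : keyOf (c :: cs') = keyOf (d :: ds.erase d) := h.trans (keyOf_perm hperm)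
      rw [keyOf_cons, keyOf_cons, hcd] at hkey
      have hk' : keyOf cs' = keyOf (ds.erase d) := by
        exact (Multiset.cons_inj_right (canon c)).mp hkey
      rw [growL_key_cons, growL_key_cons, hk', hcd]
      congr 1
      · have h1 : (growM c).map canon = (growM d).map canon :=
          hinv c List.mem_cons_self d hcd.symm
        have h2 := congrArg (Multiset.map (fun x => x ::ₘ keyOf (ds.erase d))) h1
        simpa [Multiset.map_map, Function.comp] using h2
      · have h3 := ih (fun x hx => hinv x (List.mem_cons_of_mem c hx)) (ds.erase d) hk'
        have h4 := congrArg (Multiset.map (fun k => canon c ::ₘ k)) h3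
        simpa [Multiset.map_map, Function.comp] using h4

theorem canon_eq_leaf_congr {c d : PreTree} (h : canon c = canon d) : c = leaf ↔ d = leaf := by
  constructor
  · intro hc; apply canon_eq_leaf_iff.mp; rw [← h, hc, canon_leaf]
  · intro hd; apply canon_eq_leaf_iff.mp; rw [h, hd, canon_leaf]

theorem pruneL_key_congr : ∀ (cs : List PreTree),
    (∀ c ∈ cs, ∀ u, canon c = canon u → (pruneM c).map canon = (pruneM u).map canon) →
    ∀ ds, keyOf cs = keyOf ds → (pruneL cs).map keyOf = (pruneL ds).map keyOf := by
  intro cs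
  induction cs with
  | nil =>
      intro _ ds h
      have : ds.map canon = [] := by
        have := h.symm
        rwa [keyOf_nil, keyOf, Multiset.coe_eq_zero] at this
      rw [List.map_eq_nil_iff.mp this]
  | cons c cs' ih =>
      intro hinv ds h
      have hc : canon c ∈ keyOf ds := by
        rw [← h, keyOf_cons]; exact Multiset.mem_cons_self _ _
      rcases exists_canon_eq_of_mem_keyOf hc with ⟨d, hd, hcd⟩
      have hperm := List.perm_cons_erase hd
      rw [pruneL_key_perm hperm]
      have hkey : keyOf (c :: cs') = keyOf (d :: ds.erase d) := h.trans (keyOf_perm hperm)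
      rw [keyOf_cons, keyOf_cons, hcd] at hkey
      have hk' : keyOf cs' = keyOf (ds.erase d) := by
        exact (Multiset.cons_inj_right (canon c)).mp hkey
      rw [pruneL_key_cons, pruneL_key_cons, hk']
      congr 1
      · by_cases hcl : c = leaf
        · rw [if_pos hcl, if_pos ((canon_eq_leaf_congr hcd.symm).mp hcl)]
        · rw [if_neg hcl, if_neg (fun hh => hcl ((canon_eq_leaf_congr hcd.symm).mpr hh))]
          have h1 : (pruneM c).map canon = (pruneM d).map canon :=
            hinv c List.mem_cons_self d hcd.symm
          have h2 := congrArg (Multiset.map (fun x => x ::ₘ keyOf (ds.erase d))) h1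
          simpa [Multiset.map_map, Function.comp] using h2
      · have h3 := ih (fun x hx => hinv x (List.mem_cons_of_mem c hx)) (ds.erase d) hk'
        have h4 := congrArg (Multiset.map (fun k => canon d ::ₘ k)) h3
        rw [← hcd]
        simpa [Multiset.map_map, Function.comp] using h4

theorem growM_map_canon (cs : List PreTree) :
    (growM (.node cs)).map canon =
      canon (.node (cs ++ [leaf])) ::ₘ ((growL cs).map keyOf).map F := by
  rw [growM_node, Multiset.map_cons, Multiset.map_map, Multiset.map_map]
  congr 1
  apply Multiset.map_congr rfl
  intro es _
  exact (F_key es).symm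

theorem pruneM_map_canon (cs : List PreTree) :
    (pruneM (.node cs)).map canon = ((pruneL cs).map keyOf).map F := by
  rw [pruneM_node, Multiset.map_map, Multiset.map_map]
  apply Multiset.map_congr rfl
  intro es _
  exact (F_key es).symm

theorem keyOf_concat_leaf (l : List PreTree) : keyOf (l ++ [leaf]) = leaf ::ₘ keyOf l := by
  rw [keyOf_append]
  have : keyOf [leaf] = {leaf} := by
    rw [keyOf_cons, keyOf_nil, canon_leaf]
    rfl
  rw [this]
  rw [add_comm]
  rfl

theorem canon_invariance : ∀ t u : PreTree, canon t = canon u →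
    (growM t).map canon = (growM u).map canon ∧
      (pruneM t).map canon = (pruneM u).map canon := by
  refine (mutual_ind
    (P := fun t => ∀ u, canon t = canon u →
      (growM t).map canon = (growM u).map canon ∧
        (pruneM t).map canon = (pruneM u).map canon)
    (Q := fun cs => ∀ c ∈ cs, ∀ u, canon c = canon u →
      (growM c).map canon = (growM u).map canon ∧
        (pruneM c).map canon = (pruneM u).map canon) ?_ ?_ ?_).1
  · intro cs ih u h
    cases u with
    | node ds =>
      have hk := keyOf_of_canon_eq h
      constructor
      · rw [growM_map_canon, growM_map_canon]
        congr 1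
        · apply canon_node_congr
          rw [keyOf_concat_leaf, keyOf_concat_leaf, hk]
        · rw [growL_key_congr cs (fun c hc u hcu => (ih c hc u hcu).1) ds hk]
      · rw [pruneM_map_canon, pruneM_map_canon]
        rw [pruneL_key_congr cs (fun c hc u hcu => (ih c hc u hcu).2) ds hk]
  · intro c hc; simp at hc
  · intro c cs ihc ihcs d hd
    rcases List.mem_cons.mp hd with hd | hd
    · exact hd ▸ ihc
    · exact ihcs d hd

theorem growM_canon (t : PreTree) : (growM (canon t)).map canon = (growM t).map canon :=
  (canon_invariance (canon t) t (canon_canon t)).1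

theorem pruneM_canon (t : PreTree) : (pruneM (canon t)).map canon = (pruneM t).map canon :=
  (canon_invariance (canon t) t (canon_canon t)).2

/-- Shift the first coordinate of an address. -/
def shift : List ℕ → List ℕ
  | [] => []
  | a :: p => (a + 1) :: p

theorem positions_node (cs : List PreTree) :
    positions (.node cs) = [] :: positionsList 0 cs := by
  rw [positions]

theorem positionsList_nil (i : ℕ) : positionsList i [] = [] := by rw [positionsList]

theorem positionsList_cons (i : ℕ) (t : PreTree) (ts : List PreTree) :
    positionsList i (t :: ts) =
      (positions t).map (fun p => i :: p) ++ positionsList (i + 1) ts := by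
  rw [positionsList]

theorem positionsList_shift (cs : List PreTree) :
    ∀ i, positionsList (i + 1) cs = (positionsList i cs).map shift := by
  induction cs with
  | nil => intro i; rw [positionsList_nil, positionsList_nil]; rfl
  | cons t ts ih =>
      intro i
      rw [positionsList_cons, positionsList_cons, List.map_append, List.map_map, ih (i + 1)]
      congr 1

theorem mem_positionsList_ne_nil (cs : List PreTree) :
    ∀ i, ∀ q ∈ positionsList i cs, q ≠ [] := by
  induction cs with
  | nil => intro i q hq; rw [positionsList_nil] at hq; simp at hq
  | cons t ts ih =>
      intro i q hq
      rw [positionsList_cons] at hq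
      rcases List.mem_append.mp hq with h | h
      · rcases List.mem_map.mp h with ⟨p, _, rfl⟩; simp
      · exact ih (i + 1) q h

theorem termPositions_leaf : termPositions leaf = [[]] := by
  rw [leaf, termPositions]

theorem termPositions_node_cons (c : PreTree) (cs : List PreTree) :
    termPositions (.node (c :: cs)) = termPositionsList 0 (c :: cs) := by
  rw [termPositions]

theorem termPositionsList_nil (i : ℕ) : termPositionsList i [] = [] := by
  rw [termPositionsList]

theorem termPositionsList_cons (i : ℕ) (t : PreTree) (ts : List PreTree) :
    termPositionsList i (t :: ts) =
      (termPositions t).map (fun p => i :: p) ++ termPositionsList (i + 1) ts := by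
  rw [termPositionsList]

theorem termPositionsList_shift (cs : List PreTree) :
    ∀ i, termPositionsList (i + 1) cs = (termPositionsList i cs).map shift := by
  induction cs with
  | nil => intro i; rw [termPositionsList_nil, termPositionsList_nil]; rfl
  | cons t ts ih =>
      intro i
      rw [termPositionsList_cons, termPositionsList_cons, List.map_append, List.map_map,
        ih (i + 1)]
      congr 1

theorem mem_termPositionsList_ne_nil (cs : List PreTree) :
    ∀ i, ∀ q ∈ termPositionsList i cs, q ≠ [] := by
  induction cs with
  | nil => intro i q hq; rw [termPositionsList_nil] at hq; simp at hq
  | cons t ts ih =>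
      intro i q hq
      rw [termPositionsList_cons] at hq
      rcases List.mem_append.mp hq with h | h
      · rcases List.mem_map.mp h with ⟨p, _, rfl⟩; simp
      · exact ih (i + 1) q h

theorem mem_termPositions_ne_nil {t : PreTree} (ht : t ≠ leaf) :
    ∀ q ∈ termPositions t, q ≠ [] := by
  cases t with
  | node cs =>
    cases cs with
    | nil => exact absurd rfl ht
    | cons c cs =>
        rw [termPositions_node_cons]
        exact mem_termPositionsList_ne_nil (c :: cs) 0

theorem addLeafAt_node_nil (cs : List PreTree) :
    addLeafAt (.node cs) [] = .node (cs ++ [leaf]) := by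
  rw [addLeafAt]

theorem addLeafAt_node_cons (cs : List PreTree) (i : ℕ) (p : List ℕ) :
    addLeafAt (.node cs) (i :: p) = .node (addLeafAtList cs i p) := by
  rw [addLeafAt]

theorem addLeafAtList_zero (t : PreTree) (ts : List PreTree) (p : List ℕ) :
    addLeafAtList (t :: ts) 0 p = addLeafAt t p :: ts := by
  rw [addLeafAtList]

theorem addLeafAtList_succ (t : PreTree) (ts : List PreTree) (i : ℕ) (p : List ℕ) :
    addLeafAtList (t :: ts) (i + 1) p = t :: addLeafAtList ts i p := by
  rw [addLeafAtList]

/-- List-level leaf attachment along an address. -/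
def alL (cs : List PreTree) (q : List ℕ) : List PreTree :=
  addLeafAtList cs (q.headD 0) q.tail

theorem growM_eq : ∀ t : PreTree, growM t = ((positions t).map (addLeafAt t) : List PreTree) := by
  refine (mutual_ind
    (P := fun t => growM t = ((positions t).map (addLeafAt t) : List PreTree))
    (Q := fun cs => growL cs = (((positionsList 0 cs).map (alL cs) : List (List PreTree)) :
      Multiset (List PreTree))) ?_ ?_ ?_).1
  · intro cs ih
    rw [growM_node, positions_node, List.map_cons, addLeafAt_node_nil, ← Multiset.cons_coe]
    congr 1
    have h1 : (positionsList 0 cs).map (addLeafAt (.node cs)) =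
        (positionsList 0 cs).map (fun q => PreTree.node (alL cs q)) := by
      apply List.map_congr_left
      intro q hq
      rcases List.exists_cons_of_ne_nil (mem_positionsList_ne_nil cs 0 q hq) with ⟨a, p, rfl⟩
      rw [addLeafAt_node_cons]
      rfl
    rw [h1, ih, Multiset.map_coe, List.map_map]
    rfl
  · show growL [] = _
    rw [growL_nil, positionsList_nil]; rfl
  · intro c cs ihc ihcs
    rw [growL_cons, positionsList_cons, positionsList_shift cs 0, List.map_append,
      List.map_map, List.map_map]
    have h1 : (positions c).map (alL (c :: cs) ∘ fun p => 0 :: p) =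
        ((positions c).map (addLeafAt c)).map (· :: cs) := by
      rw [List.map_map]
      apply List.map_congr_left
      intro p _
      show alL (c :: cs) (0 :: p) = addLeafAt c p :: cs
      unfold alL
      simp only [List.headD, List.tail]
      rw [addLeafAtList_zero]
    have h2 : (positionsList 0 cs).map (alL (c :: cs) ∘ shift) =
        ((positionsList 0 cs).map (alL cs)).map (c :: ·) := by
      rw [List.map_map]
      apply List.map_congr_left
      intro q hq
      rcases List.exists_cons_of_ne_nil (mem_positionsList_ne_nil cs 0 q hq) with ⟨a, p, rfl⟩
      show alL (c :: cs) ((a + 1) :: p) = c :: alL cs (a :: p)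
      unfold alL
      simp only [List.headD, List.tail]
      rw [addLeafAtList_succ]
    rw [h1, h2, ihc, ihcs, Multiset.map_coe, Multiset.map_coe]
    exact (Multiset.coe_add _ _).symm

theorem removeAt_node_single (cs : List PreTree) (i : ℕ) :
    removeAt (.node cs) [i] = .node (cs.eraseIdx i) := by
  rw [removeAt]

theorem removeAt_node_cons (cs : List PreTree) (i : ℕ) (a : ℕ) (p : List ℕ) :
    removeAt (.node cs) (i :: (a :: p)) = .node (removeAtList cs i (a :: p)) := by
  rw [removeAt]
  simp

theorem removeAtList_zero (t : PreTree) (ts : List PreTree) (p : List ℕ) :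
    removeAtList (t :: ts) 0 p = removeAt t p :: ts := by
  rw [removeAtList]

theorem removeAtList_succ (t : PreTree) (ts : List PreTree) (i : ℕ) (p : List ℕ) :
    removeAtList (t :: ts) (i + 1) p = t :: removeAtList ts i p := by
  rw [removeAtList]

/-- List-level terminal-vertex removal along an address. -/
def remL (cs : List PreTree) : List ℕ → List PreTree
  | [] => cs
  | [a] => cs.eraseIdx a
  | a :: p => removeAtList cs a p

theorem remL_single (cs : List PreTree) (a : ℕ) : remL cs [a] = cs.eraseIdx a := by
  rw [remL]

theorem remL_cons₂ (cs : List PreTree) (a b : ℕ) (p : List ℕ) :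
    remL cs (a :: (b :: p)) = removeAtList cs a (b :: p) := by
  rw [remL]
  simp

theorem pruneM_eq : ∀ t : PreTree, t ≠ leaf →
    pruneM t = ((termPositions t).map (removeAt t) : List PreTree) := by
  refine (mutual_ind
    (P := fun t => t ≠ leaf →
      pruneM t = ((termPositions t).map (removeAt t) : List PreTree))
    (Q := fun cs => pruneL cs = (((termPositionsList 0 cs).map (remL cs) : List (List PreTree)) :
      Multiset (List PreTree))) ?_ ?_ ?_).1
  · intro cs ih ht
    cases cs with
    | nil => exact absurd rfl ht
    | cons c cs0 =>
      rw [pruneM_node, termPositions_node_cons]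
      have h1 : (termPositionsList 0 (c :: cs0)).map (removeAt (.node (c :: cs0))) =
          (termPositionsList 0 (c :: cs0)).map (fun q => PreTree.node (remL (c :: cs0) q)) := by
        apply List.map_congr_left
        intro q hq
        rcases List.exists_cons_of_ne_nil
          (mem_termPositionsList_ne_nil (c :: cs0) 0 q hq) with ⟨a, p, rfl⟩
        cases p with
        | nil => rw [removeAt_node_single, remL_single]
        | cons b p' => rw [removeAt_node_cons, remL_cons₂]
      rw [h1, ih, Multiset.map_coe, List.map_map]
      rfl
  · show pruneL [] = _
    rw [pruneL_nil, termPositionsList_nil]; rfl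
  · intro c cs ihc ihcs
    rw [pruneL_cons, termPositionsList_cons, termPositionsList_shift cs 0, List.map_append,
      List.map_map, List.map_map]
    have h2 : (termPositionsList 0 cs).map (remL (c :: cs) ∘ shift) =
        ((termPositionsList 0 cs).map (remL cs)).map (c :: ·) := by
      rw [List.map_map]
      apply List.map_congr_left
      intro q hq
      rcases List.exists_cons_of_ne_nil (mem_termPositionsList_ne_nil cs 0 q hq) with ⟨a, p, rfl⟩
      cases p with
      | nil =>
          show remL (c :: cs) [a + 1] = c :: remL cs [a]
          rw [remL_single, remL_single, List.eraseIdx_cons_succ]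
      | cons b p' =>
          show remL (c :: cs) ((a + 1) :: (b :: p')) = c :: remL cs (a :: (b :: p'))
          rw [remL_cons₂, remL_cons₂, removeAtList_succ]
    rw [h2, ihcs]
    by_cases hc : c = leaf
    · rw [if_pos hc]
      subst hc
      rw [termPositions_leaf]
      have h3 : ([[]] : List (List ℕ)).map (remL (leaf :: cs) ∘ fun p => (0 : ℕ) :: p) =
          [cs] := by
        simp only [List.map_cons, List.map_nil, Function.comp_apply, remL_single,
          List.eraseIdx_cons_zero]
      rw [h3, Multiset.map_coe, ← Multiset.coe_add]
      rfl
    · rw [if_neg hc, ihc hc]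
      have h5 : (termPositions c).map (remL (c :: cs) ∘ fun p => 0 :: p) =
          ((termPositions c).map (removeAt c)).map (· :: cs) := by
        rw [List.map_map]
        apply List.map_congr_left
        intro p hp
        rcases List.exists_cons_of_ne_nil (mem_termPositions_ne_nil hc p hp) with ⟨b, p', rfl⟩
        show remL (c :: cs) (0 :: (b :: p')) = removeAt c (b :: p') :: cs
        rw [remL_cons₂, removeAtList_zero]
      rw [h5, Multiset.map_coe, Multiset.map_coe]
      exact (Multiset.coe_add _ _).symm

theorem filter_length_eq_count {α β : Type*} [DecidableEq β] (l : List α) (f : α → β) (t : β) :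
    (l.filter (fun p => f p = t)).length = Multiset.count t ((l : Multiset α).map f) := by
  rw [Multiset.map_coe, Multiset.coe_count, List.count_eq_countP, List.countP_map,
    ← List.countP_eq_length_filter]
  apply List.countP_congr
  intro x _
  simp only [Function.comp_apply, decide_eq_true_eq, beq_iff_eq]

theorem growM_map_canon_coe (s : PreTree) :
    (growM s).map canon =
      (((positions s).map (fun p => canon (addLeafAt s p)) : List PreTree) :
        Multiset PreTree) := by
  rw [growM_eq, Multiset.map_coe, List.map_map]
  rfl

theorem pruneM_map_canon_coe {t : PreTree} (ht : t ≠ leaf) :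
    (pruneM t).map canon =
      (((termPositions t).map (fun q => canon (removeAt t q)) : List PreTree) :
        Multiset PreTree) := by
  rw [pruneM_eq t ht, Multiset.map_coe, List.map_map]
  rfl

theorem ncoef_eq (s t : PreTree) : ncoef s t = Multiset.count t ((growM s).map canon) := by
  rw [ncoef, growM_map_canon_coe]
  exact filter_length_eq_count (positions s) (fun p => canon (addLeafAt s p)) t

theorem mcoef_eq (s : PreTree) {t : PreTree} (ht : t ≠ leaf) :
    mcoef s t = Multiset.count s ((pruneM t).map canon) := by
  rw [mcoef, pruneM_map_canon_coe ht]
  exact filter_length_eq_count (termPositions t) (fun q => canon (removeAt t q)) s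

theorem treeList_zero : treeList 0 = [] := by rw [treeList]
theorem treeList_one : treeList 1 = [leaf] := by rw [treeList]

theorem treeList_succ (n : ℕ) : treeList (n + 2) =
    ((treeList (n + 1)).flatMap
      (fun t => (positions t).map (fun p => canon (addLeafAt t p)))).dedup := by
  rw [treeList]

theorem treeList_nodup (n : ℕ) : (treeList n).Nodup := by
  match n with
  | 0 => rw [treeList_zero]; exact List.nodup_nil
  | 1 => rw [treeList_one]; simp
  | n + 2 => rw [treeList_succ]; exact List.nodup_dedup _

theorem mem_treeList_succ {n : ℕ} {u : PreTree} :
    u ∈ treeList (n + 2) ↔ ∃ s ∈ treeList (n + 1), u ∈ (growM s).map canon := by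
  rw [treeList_succ, List.mem_dedup, List.mem_flatMap]
  constructor
  · rintro ⟨s, hs, hm⟩
    exact ⟨s, hs, by rw [growM_map_canon_coe]; exact Multiset.mem_coe.mpr hm⟩
  · rintro ⟨s, hs, hm⟩
    rw [growM_map_canon_coe] at hm
    exact ⟨s, hs, Multiset.mem_coe.mp hm⟩

theorem mem_treeList_props : ∀ n : ℕ, ∀ t ∈ treeList n, canon t = t ∧ size t = n := by
  intro n
  induction n using Nat.strong_induction_on with
  | _ n ih =>
    match n with
    | 0 => intro t ht; rw [treeList_zero] at ht; simp at ht
    | 1 =>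
        intro t ht
        rw [treeList_one, List.mem_singleton] at ht
        subst ht
        exact ⟨canon_leaf, size_leaf⟩
    | n + 2 =>
        intro t ht
        rcases mem_treeList_succ.mp ht with ⟨s, hs, hm⟩
        rcases Multiset.mem_map.mp hm with ⟨e, he, rfl⟩
        rcases ih (n + 1) (by omega) s hs with ⟨hcs, hss⟩
        refine ⟨canon_canon e, ?_⟩
        rw [canon_size, size_growM s e he, hss]

theorem regrow : ∀ t : PreTree, ∀ u ∈ pruneM t, canon t ∈ (growM u).map canon := by
  refine (mutual_ind
    (P := fun t => ∀ u ∈ pruneM t, canon t ∈ (growM u).map canon)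
    (Q := fun cs => ∀ ds ∈ pruneL cs,
      (∃ es ∈ growL ds, keyOf es = keyOf cs) ∨ keyOf cs = leaf ::ₘ keyOf ds) ?_ ?_ ?_).1
  · intro cs ih u hu
    rw [pruneM_node] at hu
    rcases Multiset.mem_map.mp hu with ⟨ds, hds, rfl⟩
    rcases ih ds hds with ⟨es, hes, hkey⟩ | hkey
    · have h1 : PreTree.node es ∈ growM (.node ds) := by
        rw [growM_node]
        exact Multiset.mem_cons_of_mem (Multiset.mem_map_of_mem _ hes)
      have h2 := Multiset.mem_map_of_mem canon h1
      rwa [canon_node_congr hkey] at h2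
    · have h1 : PreTree.node (ds ++ [leaf]) ∈ growM (.node ds) := by
        rw [growM_node]
        exact Multiset.mem_cons_self _ _
      have h2 := Multiset.mem_map_of_mem canon h1
      have h3 : canon (PreTree.node (ds ++ [leaf])) = canon (.node cs) := by
        apply canon_node_congr
        rw [keyOf_concat_leaf, hkey]
      rwa [h3] at h2
  · intro ds hds; rw [pruneL_nil] at hds; simp at hds
  · intro c cs ihc ihcs ds hds
    rw [pruneL_cons] at hds
    rcases Multiset.mem_add.mp hds with h | h
    · by_cases hc : c = leaf
      · rw [if_pos hc] at h
        rw [Multiset.mem_singleton.mp h]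
        right
        rw [keyOf_cons, hc, canon_leaf]
      · rw [if_neg hc] at h
        rcases Multiset.mem_map.mp h with ⟨y, hy, rfl⟩
        rcases Multiset.mem_map.mp (ihc y hy) with ⟨e, he, hce⟩
        left
        refine ⟨e :: cs, ?_, ?_⟩
        · rw [growL_cons]
          exact Multiset.mem_add.mpr (Or.inl (Multiset.mem_map_of_mem _ he))
        · rw [keyOf_cons, keyOf_cons, hce]
    · rcases Multiset.mem_map.mp h with ⟨ds', hds', rfl⟩
      rcases ihcs ds' hds' with ⟨es', hes', hkey⟩ | hkey
      · left
        refine ⟨c :: es', ?_, ?_⟩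
        · rw [growL_cons]
          exact Multiset.mem_add.mpr (Or.inr (Multiset.mem_map_of_mem _ hes'))
        · rw [keyOf_cons, keyOf_cons, hkey]
      · right
        rw [keyOf_cons, hkey, keyOf_cons]
        exact Multiset.cons_swap _ _ _

theorem mem_treeList_of_canon (t : PreTree) (hc : canon t = t) : t ∈ treeList (size t) := by
  suffices h : ∀ n, ∀ t : PreTree, size t = n → canon t = t → t ∈ treeList n from
    h (size t) t rfl hc
  intro n
  induction n using Nat.strong_induction_on with
  | _ n ih =>
    intro t hn hc
    by_cases ht : t = leaf
    · subst ht
      rw [size_leaf] at hn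
      rw [← hn, treeList_one]
      exact List.mem_singleton_self _
    · rcases exists_mem_pruneM t ht with ⟨u, hu⟩
      have hsu : size u + 1 = size t := size_pruneM t u hu
      have hpos := size_pos u
      have hmem : canon u ∈ treeList (size u) := by
        apply ih (size u) (by omega) (canon u) (canon_size u) (canon_canon u)
      have hgrow : t ∈ (growM (canon u)).map canon := by
        rw [growM_canon]
        have := regrow t u hu
        rwa [hc] at this
      have hn2 : n = (size u - 1) + 2 := by omega
      rw [hn2]
      apply mem_treeList_succ.mpr
      refine ⟨canon u, ?_, hgrow⟩
      have he : size u - 1 + 1 = size u := by omega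
      rw [he]
      exact hmem

theorem map_nsmul' {α β : Type*} (f : α → β) (n : ℕ) (s : Multiset α) :
    (n • s).map f = n • s.map f := by
  induction n with
  | zero => simp
  | succ k ih => rw [succ_nsmul, succ_nsmul, Multiset.map_add, ih]

theorem pruneM_leaf : pruneM leaf = 0 := by
  rw [leaf, pruneM_node, pruneL_nil]
  rfl

/-- Key commutation identity: pruning after growing vs growing after pruning. -/
theorem KMI : ∀ t : PreTree,
    (growM t).bind (fun x => (pruneM x).map canon) =
      (pruneM t).bind (fun y => (growM y).map canon) + (size t) • {canon t} := by
  refine (mutual_ind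
    (P := fun t => (growM t).bind (fun x => (pruneM x).map canon) =
      (pruneM t).bind (fun y => (growM y).map canon) + (size t) • {canon t})
    (Q := fun cs => (growL cs).bind (fun es => (pruneL es).map keyOf) =
      (pruneL cs).bind (fun ds => (growL ds).map keyOf) + (sizeList cs) • {keyOf cs})
    ?_ ?_ ?_).1
  · -- node case
    intro cs hQ'
    have hQ : (growL cs).bind (fun es => (pruneL es).map keyOf) =
        (pruneL cs).bind (fun ds => (growL ds).map keyOf) + (sizeList cs) • {keyOf cs} := hQ'
    show (growM (.node cs)).bind (fun x => (pruneM x).map canon) =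
      (pruneM (.node cs)).bind (fun y => (growM y).map canon) +
        (size (.node cs)) • {canon (.node cs)}
    rw [growM_node, Multiset.cons_bind, Multiset.bind_map]
    have e1 : (pruneM (.node (cs ++ [leaf]))).map canon =
        ((pruneL cs).map (fun ds => canon (.node (ds ++ [leaf])))) + {canon (.node cs)} := by
      rw [pruneM_node, pruneL_concat, Multiset.map_add, Multiset.map_add, Multiset.map_map,
        Multiset.map_map, Multiset.map_singleton, Multiset.map_singleton]
      rfl
    have e3 : (growL cs).bind (fun es => (pruneM (PreTree.node es)).map canon)
        = (pruneL cs).bind (fun ds => ((growL ds).map keyOf).map F) +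
          (sizeList cs) • {canon (.node cs)} := by
      calc (growL cs).bind (fun es => (pruneM (PreTree.node es)).map canon)
          = (growL cs).bind (fun es => ((pruneL es).map keyOf).map F) :=
            Multiset.bind_congr (fun es _ => pruneM_map_canon es)
        _ = ((growL cs).bind (fun es => (pruneL es).map keyOf)).map F :=
            (Multiset.map_bind _ _ _).symm
        _ = ((pruneL cs).bind (fun ds => (growL ds).map keyOf) +
              (sizeList cs) • {keyOf cs}).map F := by rw [hQ]
        _ = ((pruneL cs).bind (fun ds => (growL ds).map keyOf)).map F +
              (sizeList cs) • {canon (.node cs)} := by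
            rw [Multiset.map_add, map_nsmul', Multiset.map_singleton, F_key]
        _ = (pruneL cs).bind (fun ds => ((growL ds).map keyOf).map F) +
              (sizeList cs) • {canon (.node cs)} := by rw [Multiset.map_bind]
    rw [e1, e3, pruneM_node, Multiset.bind_map]
    have e4 : (pruneL cs).bind (fun ds => (growM (PreTree.node ds)).map canon)
        = (pruneL cs).map (fun ds => canon (.node (ds ++ [leaf]))) +
          (pruneL cs).bind (fun ds => ((growL ds).map keyOf).map F) := by
      calc (pruneL cs).bind (fun ds => (growM (PreTree.node ds)).map canon)
          = (pruneL cs).bind (fun ds => ({canon (.node (ds ++ [leaf]))} : Multiset PreTree) +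
              ((growL ds).map keyOf).map F) :=
            Multiset.bind_congr (fun ds _ => by
              rw [growM_map_canon, ← Multiset.singleton_add])
        _ = (pruneL cs).bind (fun ds => ({canon (.node (ds ++ [leaf]))} : Multiset PreTree)) +
              (pruneL cs).bind (fun ds => ((growL ds).map keyOf).map F) :=
            Multiset.bind_add _ _ _
        _ = _ := by rw [Multiset.bind_singleton]
    rw [e4, size_node, add_nsmul, one_nsmul]
    abel
  · -- nil case
    show (growL []).bind (fun es => (pruneL es).map keyOf) =
      (pruneL []).bind (fun ds => (growL ds).map keyOf) + (sizeList []) • {keyOf []}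
    rw [growL_nil, pruneL_nil]
    simp [sizeList]
  · -- cons case
    intro c cs hP' hQ'
    have hP : (growM c).bind (fun x => (pruneM x).map canon) =
        (pruneM c).bind (fun y => (growM y).map canon) + (size c) • {canon c} := hP'
    have hQ : (growL cs).bind (fun es => (pruneL es).map keyOf) =
        (pruneL cs).bind (fun ds => (growL ds).map keyOf) + (sizeList cs) • {keyOf cs} := hQ'
    show (growL (c :: cs)).bind (fun es => (pruneL es).map keyOf) =
      (pruneL (c :: cs)).bind (fun ds => (growL ds).map keyOf) +
        (sizeList (c :: cs)) • {keyOf (c :: cs)}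
    have hsl : sizeList (c :: cs) = size c + sizeList cs := by simp [sizeList]
    rw [growL_cons, Multiset.add_bind, Multiset.bind_map, Multiset.bind_map, hsl]
    -- analyze term 1
    have L1 : (growM c).bind (fun x => (pruneL (x :: cs)).map keyOf) =
        ((pruneM c).bind (fun y => (growM y).map (fun x => canon x ::ₘ keyOf cs)) +
          size c • {keyOf (c :: cs)}) +
        (pruneL cs).bind (fun ds => (growM c).map (fun x => canon x ::ₘ keyOf ds)) := by
      calc (growM c).bind (fun x => (pruneL (x :: cs)).map keyOf)
          = (growM c).bind (fun x => (pruneM x).map (fun y => canon y ::ₘ keyOf cs) +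
              (pruneL cs).map (fun ds => canon x ::ₘ keyOf ds)) :=
            Multiset.bind_congr (fun x hx => by
              rw [pruneL_key_cons, if_neg (ne_leaf_of_mem_growM hx)])
        _ = (growM c).bind (fun x => (pruneM x).map (fun y => canon y ::ₘ keyOf cs)) +
              (growM c).bind (fun x => (pruneL cs).map (fun ds => canon x ::ₘ keyOf ds)) :=
            Multiset.bind_add _ _ _
        _ = ((pruneM c).bind (fun y => (growM y).map (fun x => canon x ::ₘ keyOf cs)) +
              size c • {keyOf (c :: cs)}) +
            (pruneL cs).bind (fun ds => (growM c).map (fun x => canon x ::ₘ keyOf ds)) := by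
            congr 1
            · calc (growM c).bind (fun x => (pruneM x).map (fun y => canon y ::ₘ keyOf cs))
                  = (growM c).bind (fun x => ((pruneM x).map canon).map
                      (fun k => k ::ₘ keyOf cs)) :=
                    Multiset.bind_congr (fun x _ => by rw [Multiset.map_map]; rfl)
                _ = ((growM c).bind (fun x => (pruneM x).map canon)).map
                      (fun k => k ::ₘ keyOf cs) := (Multiset.map_bind _ _ _).symm
                _ = ((pruneM c).bind (fun y => (growM y).map canon) +
                      size c • {canon c}).map (fun k => k ::ₘ keyOf cs) := by rw [hP]
                _ = ((pruneM c).bind (fun y => (growM y).map canon)).map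
                      (fun k => k ::ₘ keyOf cs) + size c • {keyOf (c :: cs)} := by
                    rw [Multiset.map_add, map_nsmul', Multiset.map_singleton, keyOf_cons]
                _ = (pruneM c).bind (fun y => (growM y).map (fun x => canon x ::ₘ keyOf cs)) +
                      size c • {keyOf (c :: cs)} := by
                    rw [Multiset.map_bind]
                    congr 1
                    exact Multiset.bind_congr (fun y _ => by rw [Multiset.map_map]; rfl)
            · exact bind_map_comm _ _ _
    -- analyze term 2
    have L2 : (growL cs).bind (fun es => (pruneL (c :: es)).map keyOf) =
        (growL cs).bind (fun es => if c = leaf then ({keyOf es} : Multiset (Multiset PreTree))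
            else (pruneM c).map (fun y => canon y ::ₘ keyOf es)) +
        ((pruneL cs).bind (fun ds => (growL ds).map (fun es => canon c ::ₘ keyOf es)) +
          sizeList cs • {keyOf (c :: cs)}) := by
      calc (growL cs).bind (fun es => (pruneL (c :: es)).map keyOf)
          = (growL cs).bind (fun es =>
              (if c = leaf then ({keyOf es} : Multiset (Multiset PreTree))
                else (pruneM c).map (fun y => canon y ::ₘ keyOf es)) +
              (pruneL es).map (fun ds => canon c ::ₘ keyOf ds)) :=
            Multiset.bind_congr (fun es _ => by rw [pruneL_key_cons])
        _ = (growL cs).bind (fun es => if c = leaf then ({keyOf es} : Multiset (Multiset PreTree))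
              else (pruneM c).map (fun y => canon y ::ₘ keyOf es)) +
            (growL cs).bind (fun es => (pruneL es).map (fun ds => canon c ::ₘ keyOf ds)) :=
            Multiset.bind_add _ _ _
        _ = _ := by
            congr 1
            calc (growL cs).bind (fun es => (pruneL es).map (fun ds => canon c ::ₘ keyOf ds))
                = (growL cs).bind (fun es => ((pruneL es).map keyOf).map
                    (fun k => canon c ::ₘ k)) :=
                  Multiset.bind_congr (fun es _ => by rw [Multiset.map_map]; rfl)
              _ = ((growL cs).bind (fun es => (pruneL es).map keyOf)).map
                    (fun k => canon c ::ₘ k) := (Multiset.map_bind _ _ _).symm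
              _ = ((pruneL cs).bind (fun ds => (growL ds).map keyOf) +
                    sizeList cs • {keyOf cs}).map (fun k => canon c ::ₘ k) := by rw [hQ]
              _ = ((pruneL cs).bind (fun ds => (growL ds).map keyOf)).map
                    (fun k => canon c ::ₘ k) + sizeList cs • {keyOf (c :: cs)} := by
                  rw [Multiset.map_add, map_nsmul', Multiset.map_singleton, keyOf_cons]
              _ = (pruneL cs).bind (fun ds => (growL ds).map (fun es => canon c ::ₘ keyOf es)) +
                    sizeList cs • {keyOf (c :: cs)} := by
                  rw [Multiset.map_bind]
                  congr 1
                  exact Multiset.bind_congr (fun ds _ => by rw [Multiset.map_map]; rfl)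
    rw [L1, L2, pruneL_cons, Multiset.add_bind, Multiset.bind_map]
    have R2 : (pruneL cs).bind (fun ds => (growL (c :: ds)).map keyOf) =
        (pruneL cs).bind (fun ds => (growM c).map (fun x => canon x ::ₘ keyOf ds)) +
        (pruneL cs).bind (fun ds => (growL ds).map (fun es => canon c ::ₘ keyOf es)) := by
      calc (pruneL cs).bind (fun ds => (growL (c :: ds)).map keyOf)
          = (pruneL cs).bind (fun ds => (growM c).map (fun x => canon x ::ₘ keyOf ds) +
              (growL ds).map (fun es => canon c ::ₘ keyOf es)) :=
            Multiset.bind_congr (fun ds _ => by rw [growL_key_cons])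
        _ = _ := Multiset.bind_add _ _ _
    rw [R2]
    by_cases hc : c = leaf
    · have hz : (pruneM c).bind (fun y => (growM y).map (fun x => canon x ::ₘ keyOf cs)) = 0 := by
        rw [hc, pruneM_leaf]
        rfl
      have hT2a : (growL cs).bind (fun es => if c = leaf
            then ({keyOf es} : Multiset (Multiset PreTree))
            else (pruneM c).map (fun y => canon y ::ₘ keyOf es)) =
          (growL cs).map keyOf :=
        (Multiset.bind_congr (fun es _ => by rw [if_pos hc])).trans
          (Multiset.bind_singleton _ _)
      have hR1 : (if c = leaf then ({cs} : Multiset (List PreTree))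
            else (pruneM c).map (· :: cs)).bind (fun ds => (growL ds).map keyOf) =
          (growL cs).map keyOf := by
        rw [if_pos hc, Multiset.singleton_bind]
      rw [hz, hT2a, hR1, add_nsmul]
      abel
    · have hT2a : (growL cs).bind (fun es => if c = leaf
            then ({keyOf es} : Multiset (Multiset PreTree))
            else (pruneM c).map (fun y => canon y ::ₘ keyOf es)) =
          (growL cs).bind (fun es => (pruneM c).map (fun y => canon y ::ₘ keyOf es)) :=
        Multiset.bind_congr (fun es _ => by rw [if_neg hc])
      have hR1 : (if c = leaf then ({cs} : Multiset (List PreTree))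
            else (pruneM c).map (· :: cs)).bind (fun ds => (growL ds).map keyOf) =
          (pruneM c).bind (fun y => (growM y).map (fun x => canon x ::ₘ keyOf cs)) +
          (growL cs).bind (fun es => (pruneM c).map (fun y => canon y ::ₘ keyOf es)) := by
        rw [if_neg hc, Multiset.bind_map]
        calc (pruneM c).bind (fun y => (growL (y :: cs)).map keyOf)
            = (pruneM c).bind (fun y => (growM y).map (fun x => canon x ::ₘ keyOf cs) +
                (growL cs).map (fun es => canon y ::ₘ keyOf es)) :=
              Multiset.bind_congr (fun y _ => by rw [growL_key_cons])
          _ = (pruneM c).bind (fun y => (growM y).map (fun x => canon x ::ₘ keyOf cs)) +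
                (pruneM c).bind (fun y => (growL cs).map (fun es => canon y ::ₘ keyOf es)) :=
              Multiset.bind_add _ _ _
          _ = _ := by rw [bind_map_comm]
      rw [hT2a, hR1, add_nsmul]
      abel

theorem count_bind_eq_sum (Fs : Finset PreTree) (m : Multiset PreTree)
    (hm : ∀ x ∈ m, x ∈ Fs) (f : PreTree → Multiset PreTree) (a : PreTree) :
    Multiset.count a (m.bind f) = ∑ x ∈ Fs, Multiset.count x m * Multiset.count a (f x) := by
  rw [Multiset.count_bind, Finset.sum_multiset_map_count]
  rw [Finset.sum_subset (fun x hx => hm x (Multiset.mem_toFinset.mp hx))]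
  · simp [smul_eq_mul]
  · intro x _ hx
    rw [Multiset.count_eq_zero_of_notMem (fun hc => hx (Multiset.mem_toFinset.mpr hc))]
    simp

theorem mem_trees_iff {n : ℕ} {t : PreTree} : t ∈ trees n ↔ t ∈ treeList n := by
  rw [trees, List.mem_toFinset]

theorem ne_leaf_of_two_le_size {t : PreTree} (h : 2 ≤ size t) : t ≠ leaf := by
  intro h0
  rw [h0, size_leaf] at h
  omega

theorem comm_identity (k : ℕ) {t t' : PreTree}
    (ht : t ∈ trees (k + 1)) (ht' : t' ∈ trees (k + 1)) :
    ∑ u ∈ trees (k + 2), ncoef t u * mcoef t' u =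
      (∑ v ∈ trees k, mcoef v t * ncoef v t') + (k + 1) * (if t' = t then 1 else 0) := by
  rcases mem_treeList_props (k + 1) t (mem_trees_iff.mp ht) with ⟨hct, hst⟩
  rcases mem_treeList_props (k + 1) t' (mem_trees_iff.mp ht') with ⟨hct', hst'⟩
  have step1 : ∑ u ∈ trees (k + 2), ncoef t u * mcoef t' u =
      ∑ u ∈ trees (k + 2), Multiset.count u ((growM t).map canon) *
        Multiset.count t' ((pruneM u).map canon) := by
    apply Finset.sum_congr rfl
    intro u hu
    rcases mem_treeList_props (k + 2) u (mem_trees_iff.mp hu) with ⟨_, hsu⟩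
    rw [ncoef_eq, mcoef_eq t' (ne_leaf_of_two_le_size (by omega))]
  have hmem : ∀ x ∈ (growM t).map canon, x ∈ trees (k + 2) := by
    intro x hx
    rcases Multiset.mem_map.mp hx with ⟨e, he, rfl⟩
    exact mem_trees_iff.mpr (mem_treeList_succ.mpr
      ⟨t, mem_trees_iff.mp ht, Multiset.mem_map_of_mem canon he⟩)
  have step2 : ∑ u ∈ trees (k + 2), Multiset.count u ((growM t).map canon) *
      Multiset.count t' ((pruneM u).map canon) =
      Multiset.count t' (((growM t).map canon).bind (fun u => (pruneM u).map canon)) :=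
    (count_bind_eq_sum (trees (k + 2)) _ hmem _ t').symm
  have step3 : ((growM t).map canon).bind (fun u => (pruneM u).map canon) =
      (pruneM t).bind (fun y => (growM y).map canon) + (size t) • {canon t} := by
    rw [Multiset.bind_map]
    rw [Multiset.bind_congr (fun x _ => pruneM_canon x)]
    exact KMI t
  have step4 : (pruneM t).bind (fun y => (growM y).map canon) =
      ((pruneM t).map canon).bind (fun y => (growM y).map canon) := by
    rw [Multiset.bind_map]
    exact (Multiset.bind_congr (fun y _ => growM_canon y)).symm
  have hmem2 : ∀ s ∈ (pruneM t).map canon, s ∈ trees k := by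
    intro s hs
    rcases Multiset.mem_map.mp hs with ⟨u, hu, rfl⟩
    have h1 : size u + 1 = size t := size_pruneM t u hu
    have h2 : size (canon u) = k := by rw [canon_size]; omega
    have := mem_treeList_of_canon (canon u) (canon_canon u)
    rw [h2] at this
    exact mem_trees_iff.mpr this
  have step5 : Multiset.count t' (((pruneM t).map canon).bind
      (fun y => (growM y).map canon)) =
      ∑ v ∈ trees k, Multiset.count v ((pruneM t).map canon) *
        Multiset.count t' ((growM v).map canon) :=
    count_bind_eq_sum (trees k) _ hmem2 _ t'
  have step6 : ∑ v ∈ trees k, Multiset.count v ((pruneM t).map canon) *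
      Multiset.count t' ((growM v).map canon) = ∑ v ∈ trees k, mcoef v t * ncoef v t' := by
    apply Finset.sum_congr rfl
    intro v hv
    rcases mem_treeList_props k v (mem_trees_iff.mp hv) with ⟨_, hsv⟩
    have hk1 : 1 ≤ k := by
      have := size_pos v
      omega
    rw [ncoef_eq, mcoef_eq v (ne_leaf_of_two_le_size (by omega))]
  rw [step1, step2, step3, Multiset.count_add, step4, step5, step6]
  congr 1
  rw [Multiset.count_nsmul, Multiset.count_singleton, hct, hst]

theorem trees_zero : trees 0 = ∅ := by
  rw [trees, treeList_zero]
  rfl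

theorem trees_one : trees 1 = {leaf} := by
  rw [trees, treeList_one]
  rfl

theorem sum_trees {M : Type*} [AddCommMonoid M] (n : ℕ) (f : PreTree → M) :
    ∑ t ∈ trees n, f t = ((treeList n).map f).sum := by
  rw [trees]
  exact List.sum_toFinset f (treeList_nodup n)

theorem nWt_leaf : nWt leaf = 1 := by
  have h : size leaf - 1 = 0 := by rw [size_leaf]
  rw [nWt, h, nGen, if_pos rfl]

theorem mWt_leaf : mWt leaf = 1 := by
  have h : size leaf - 1 = 0 := by rw [size_leaf]
  rw [mWt, h, mGen, if_pos rfl]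

theorem nWt_rec {t : PreTree} {n : ℕ} (h : size t = n + 2) :
    nWt t = ∑ s ∈ trees (n + 1), nWt s * ncoef s t := by
  have h1 : size t - 1 = n + 1 := by omega
  rw [nWt, h1, nGen, size_leaf, Nat.add_comm 1 n, ← sum_trees]
  apply Finset.sum_congr rfl
  intro s hs
  rcases mem_treeList_props (n + 1) s (mem_trees_iff.mp hs) with ⟨_, hss⟩
  have hs1 : size s - 1 = n := by omega
  rw [nWt, hs1]

theorem mWt_rec {t : PreTree} {n : ℕ} (h : size t = n + 2) :
    mWt t = ∑ s ∈ trees (n + 1), mcoef s t * mWt s := by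
  have h1 : size t - 1 = n + 1 := by omega
  rw [mWt, h1, mGen, h1, ← sum_trees]
  apply Finset.sum_congr rfl
  intro s hs
  rcases mem_treeList_props (n + 1) s (mem_trees_iff.mp hs) with ⟨_, hss⟩
  have hs1 : size s - 1 = n := by omega
  rw [mWt, hs1]

theorem lemA : ∀ n : ℕ, ∀ s ∈ trees n,
    ∑ t ∈ trees (n + 1), nWt t * mcoef s t = Nat.choose (n + 1) 2 * nWt s := by
  intro n
  induction n with
  | zero =>
      intro s hs
      rw [trees_zero] at hs
      simp at hs
  | succ k ih =>
      intro s hs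
      have e1 : ∑ t ∈ trees (k + 2), nWt t * mcoef s t =
          ∑ s' ∈ trees (k + 1), nWt s' * ∑ t ∈ trees (k + 2), ncoef s' t * mcoef s t := by
        symm
        calc ∑ s' ∈ trees (k + 1), nWt s' * ∑ t ∈ trees (k + 2), ncoef s' t * mcoef s t
            = ∑ s' ∈ trees (k + 1), ∑ t ∈ trees (k + 2),
                nWt s' * (ncoef s' t * mcoef s t) := by
              apply Finset.sum_congr rfl
              intro s' _
              rw [Finset.mul_sum]
          _ = ∑ t ∈ trees (k + 2), ∑ s' ∈ trees (k + 1),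
                nWt s' * (ncoef s' t * mcoef s t) := Finset.sum_comm
          _ = ∑ t ∈ trees (k + 2), nWt t * mcoef s t := by
              apply Finset.sum_congr rfl
              intro t ht
              rcases mem_treeList_props (k + 2) t (mem_trees_iff.mp ht) with ⟨_, hts⟩
              rw [nWt_rec hts, Finset.sum_mul]
              apply Finset.sum_congr rfl
              intro s' _
              ring
      rw [e1]
      have e2 : ∑ s' ∈ trees (k + 1), nWt s' *
          ∑ t ∈ trees (k + 2), ncoef s' t * mcoef s t =
          ∑ s' ∈ trees (k + 1), (nWt s' * ∑ v ∈ trees k, mcoef v s' * ncoef v s +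
            nWt s' * ((k + 1) * if s = s' then 1 else 0)) := by
        apply Finset.sum_congr rfl
        intro s' hs'
        rw [comm_identity k hs' hs, Nat.mul_add]
      rw [e2, Finset.sum_add_distrib]
      have e3 : ∑ s' ∈ trees (k + 1), nWt s' * ((k + 1) * if s = s' then 1 else 0) =
          (k + 1) * nWt s := by
        rw [Finset.sum_eq_single_of_mem s hs]
        · rw [if_pos rfl]; ring
        · intro b _ hb
          rw [if_neg (fun hh => hb hh.symm)]
          ring
      rw [e3]
      have e4 : ∑ s' ∈ trees (k + 1), nWt s' * ∑ v ∈ trees k, mcoef v s' * ncoef v s =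
          Nat.choose (k + 1) 2 * ∑ v ∈ trees k, nWt v * ncoef v s := by
        calc ∑ s' ∈ trees (k + 1), nWt s' * ∑ v ∈ trees k, mcoef v s' * ncoef v s
            = ∑ s' ∈ trees (k + 1), ∑ v ∈ trees k,
                nWt s' * (mcoef v s' * ncoef v s) := by
              apply Finset.sum_congr rfl
              intro s' _
              rw [Finset.mul_sum]
          _ = ∑ v ∈ trees k, ∑ s' ∈ trees (k + 1),
                nWt s' * (mcoef v s' * ncoef v s) := Finset.sum_comm
          _ = ∑ v ∈ trees k, Nat.choose (k + 1) 2 * (nWt v * ncoef v s) := by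
              apply Finset.sum_congr rfl
              intro v hv
              have hsum : ∑ s' ∈ trees (k + 1), nWt s' * (mcoef v s' * ncoef v s) =
                  (∑ s' ∈ trees (k + 1), nWt s' * mcoef v s') * ncoef v s := by
                rw [Finset.sum_mul]
                apply Finset.sum_congr rfl
                intro s' _
                ring
              rw [hsum, ih v hv]
              ring
          _ = Nat.choose (k + 1) 2 * ∑ v ∈ trees k, nWt v * ncoef v s := by
              rw [Finset.mul_sum]
      rw [e4]
      have hchoose : Nat.choose (k + 2) 2 = (k + 1) + Nat.choose (k + 1) 2 := by
        have h := Nat.choose_succ_succ (k + 1) 1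
        rwa [Nat.choose_one_right] at h
      rcases Nat.eq_zero_or_pos k with hk | hk
      · subst hk
        have hc1 : Nat.choose 1 2 = 0 := Nat.choose_eq_zero_of_lt (by omega)
        rw [trees_zero]
        simp [hchoose, hc1]
      · obtain ⟨k', rfl⟩ : ∃ k', k = k' + 1 := ⟨k - 1, by omega⟩
        rcases mem_treeList_props (k' + 2) s (mem_trees_iff.mp hs) with ⟨_, hss⟩
        rw [← nWt_rec hss, hchoose]
        ring

theorem S_eq : ∀ n : ℕ, 1 ≤ n →
    ∑ t ∈ trees n, mWt t * nWt t = ∏ i ∈ Finset.Icc 2 n, Nat.choose i 2 := by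
  intro n
  induction n with
  | zero => intro h; omega
  | succ k ih =>
      intro _
      rcases Nat.eq_zero_or_pos k with hk | hk
      · subst hk
        rw [trees_one, Finset.Icc_eq_empty (by omega), Finset.prod_empty,
          Finset.sum_singleton, mWt_leaf, nWt_leaf]
        ring
      · obtain ⟨k', rfl⟩ : ∃ k', k = k' + 1 := ⟨k - 1, by omega⟩
        have e1 : ∑ t ∈ trees (k' + 2), mWt t * nWt t =
            ∑ s ∈ trees (k' + 1), mWt s * ∑ t ∈ trees (k' + 2), nWt t * mcoef s t := by
          symm
          calc ∑ s ∈ trees (k' + 1), mWt s * ∑ t ∈ trees (k' + 2), nWt t * mcoef s t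
              = ∑ s ∈ trees (k' + 1), ∑ t ∈ trees (k' + 2),
                  mWt s * (nWt t * mcoef s t) := by
                apply Finset.sum_congr rfl
                intro s _
                rw [Finset.mul_sum]
            _ = ∑ t ∈ trees (k' + 2), ∑ s ∈ trees (k' + 1),
                  mWt s * (nWt t * mcoef s t) := Finset.sum_comm
            _ = ∑ t ∈ trees (k' + 2), mWt t * nWt t := by
                apply Finset.sum_congr rfl
                intro t ht
                rcases mem_treeList_props (k' + 2) t (mem_trees_iff.mp ht) with ⟨_, hts⟩
                rw [mWt_rec hts, Finset.sum_mul]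
                apply Finset.sum_congr rfl
                intro s _
                ring
        rw [e1]
        have e2 : ∑ s ∈ trees (k' + 1), mWt s * ∑ t ∈ trees (k' + 2), nWt t * mcoef s t =
            Nat.choose (k' + 2) 2 * ∑ s ∈ trees (k' + 1), mWt s * nWt s := by
          rw [Finset.mul_sum]
          apply Finset.sum_congr rfl
          intro s hs
          rw [lemA (k' + 1) s hs]
          ring
        rw [e2, ih (by omega), Finset.prod_Icc_succ_top (by omega : 2 ≤ k' + 2)]
        ring

end PreTree


open PreTree in
/-- `π_n` is a probability measure on `𝒯_n`:
`Σ_{t ∈ 𝒯_n} m(t) n(t) = ∏_{i=2}^n C(i,2)`, i.e. `Σ_{t ∈ 𝒯_n} π_n(t) = 1`. -/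
theorem piM_is_probability (n : ℕ) (hn : 1 ≤ n) :
    (∑ t ∈ trees n, mWt t * nWt t) = (∏ i ∈ Finset.Icc 2 n, Nat.choose i 2)
      ∧ ∑ t ∈ trees n, piM n t = 1 := by
  have h1 : (∑ t ∈ trees n, mWt t * nWt t) = ∏ i ∈ Finset.Icc 2 n, Nat.choose i 2 :=
    S_eq n hn
  refine ⟨h1, ?_⟩
  have hD : (∏ i ∈ Finset.Icc 2 n, (Nat.choose i 2 : ℚ)) ≠ 0 := by
    apply Finset.prod_ne_zero_iff.mpr
    intro i hi
    have h2 : 2 ≤ i := (Finset.mem_Icc.mp hi).1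
    exact_mod_cast (Nat.choose_pos h2).ne'
  have h3 : ∑ t ∈ trees n, piM n t =
      (∑ t ∈ trees n, (mWt t * nWt t : ℚ)) /
        ∏ i ∈ Finset.Icc 2 n, (Nat.choose i 2 : ℚ) := by
    rw [Finset.sum_div]
    rfl
  have h4 : (∑ t ∈ trees n, (mWt t * nWt t : ℚ)) =
      ∏ i ∈ Finset.Icc 2 n, (Nat.choose i 2 : ℚ) := by
    rw [← Nat.cast_prod, ← h1, Nat.cast_sum]
    apply Finset.sum_congr rfl
    intro t _
    push_cast
    ring
  rw [h3, h4, div_self hD]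

end RootedTreeChain
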